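/- For any fully connected feedforward ReLU network φ: ℝ → ℝ² and any n-tiled histogram distribution P ∈ E[0,1]²ₙ, the total variation distance between P and the pushforward φ#U of the uniform distribution U on [0,1] under φ equals 1, i.e. TV(P, φ#U) = 1. -/

import Mathlib

open MeasureTheory Set ENNReal

noncomputable section

/-- Coordinatewise ReLU activation. -/
def relu {m : ℕ} (x : Fin m → ℝ) : Fin m → ℝ := fun i => max 0 (x i)

/-- `M` is an affine map `ℝ^m → ℝ^k`. -/
def IsAffineMap {m k : ℕ} (M : (Fin m → ℝ) → (Fin k → ℝ)) : Prop :=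
  ∃ (A : Matrix (Fin k) (Fin m) ℝ) (b : Fin k → ℝ), ∀ x, M x = A.mulVec x + b

/-- `RealizedBy L m0 mL φ N` : the map `φ : ℝ^{m0} → ℝ^{mL}` is a fully connected feedforward
ReLU network of depth `L` and size `N`, i.e. `φ = M_L ∘ ReLU ∘ M_{L-1} ∘ ⋯ ∘ ReLU ∘ M_1` for
affine maps `M_i : ℝ^{m_{i-1}} → ℝ^{m_i}` with `m_1, …, m_{L-1} > 0` and `N = m_1 + ⋯ + m_L`. -/
def RealizedBy : (L : ℕ) → (m0 mL : ℕ) → ((Fin m0 → ℝ) → (Fin mL → ℝ)) → ℕ → Prop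
  | 0, _, _, _, _ => False
  | 1, _, mL, φ, N => IsAffineMap φ ∧ N = mL
  | (L + 2), m0, mL, φ, N =>
      ∃ (m1 : ℕ) (M1 : (Fin m0 → ℝ) → (Fin m1 → ℝ))
        (ψ : (Fin m1 → ℝ) → (Fin mL → ℝ)) (N' : ℕ),
        0 < m1 ∧ IsAffineMap M1 ∧ RealizedBy (L + 1) m1 mL ψ N' ∧
        N = m1 + N' ∧ ∀ x, φ x = ψ (relu (M1 x))

/-- The uniform probability distribution on `[0,1]`. -/
def Uniform01 : Measure ℝ := volume.restrict (Set.Icc 0 1)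

/-- The tile `c_k` in `[0,1]²` (as a subset of `Fin 2 → ℝ`). -/
def tile2 (n : ℕ) (k1 k2 : Fin n) : Set (Fin 2 → ℝ) :=
  {x | x 0 ∈ Set.Icc ((k1 : ℝ) / n) (((k1 : ℝ) + 1) / n) ∧
       x 1 ∈ Set.Icc ((k2 : ℝ) / n) (((k2 : ℝ) + 1) / n)}

/-- `μ` is an `n`-tiled histogram distribution on `[0,1]²`, i.e. `μ ∈ E[0,1]²ₙ`. -/
def IsHist2 (n : ℕ) (μ : Measure (Fin 2 → ℝ)) : Prop :=
  ∃ w : Fin n → Fin n → ℝ, (∀ k1 k2, 0 < w k1 k2) ∧ (∑ k1, ∑ k2, w k1 k2 = (n : ℝ) ^ 2) ∧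
    μ = volume.withDensity fun x =>
      ∑ k1 : Fin n, ∑ k2 : Fin n,
        Set.indicator (tile2 n k1 k2) (fun _ => ENNReal.ofReal (w k1 k2)) x

/-- The total variation distance `TV(μ,ν) = sup_{A measurable} |μ(A) - ν(A)|`. -/
def tvDist {E : Type*} [MeasurableSpace E] (μ ν : Measure E) : ℝ :=
  ⨆ A : {A : Set E // MeasurableSet A}, |(μ A.1).toReal - (ν A.1).toReal|

lemma affine_lipschitz {m k : ℕ} {M : (Fin m → ℝ) → (Fin k → ℝ)} (h : IsAffineMap M) :
    ∃ K, LipschitzWith K M := by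
  obtain ⟨A, b, hM⟩ := h
  refine ⟨‖A.mulVecLin.toContinuousLinearMap‖₊, LipschitzWith.of_dist_le_mul fun x y => ?_⟩
  have := A.mulVecLin.toContinuousLinearMap.lipschitz.dist_le_mul x y
  simpa [hM, dist_add_right, Matrix.mulVecLin_apply] using this

lemma relu_lipschitz {m : ℕ} : LipschitzWith 1 (relu (m := m)) := by
  refine LipschitzWith.of_dist_le_mul fun x y => ?_
  rw [NNReal.coe_one, one_mul]
  refine (dist_pi_le_iff dist_nonneg).2 fun i => ?_
  calc dist (relu x i) (relu y i) ≤ dist (x i) (y i) := by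
        simp only [relu, Real.dist_eq, max_comm (0:ℝ)]
        exact abs_max_sub_max_le_abs _ _ _
    _ ≤ dist x y := dist_le_pi_dist x y i

lemma realized_lipschitz :
    ∀ (L m0 mL : ℕ) (φ : (Fin m0 → ℝ) → (Fin mL → ℝ)) (N : ℕ),
      RealizedBy (L + 1) m0 mL φ N → ∃ K, LipschitzWith K φ := by
  intro L
  induction L with
  | zero =>
    intro m0 mL φ N h
    exact affine_lipschitz h.1
  | succ L ih =>
    intro m0 mL φ N h
    obtain ⟨m1, M1, ψ, N', _, hM1, hψ, _, hc⟩ := h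
    obtain ⟨K1, hK1⟩ := affine_lipschitz hM1
    obtain ⟨K2, hK2⟩ := ih m1 mL ψ N' hψ
    refine ⟨K2 * (1 * K1), ?_⟩
    have : LipschitzWith (K2 * (1 * K1)) fun x => ψ (relu (M1 x)) :=
      hK2.comp (relu_lipschitz.comp hK1)
    rw [show φ = fun x => ψ (relu (M1 x)) from funext hc]
    exact this

lemma tile2_eq (n : ℕ) (k1 k2 : Fin n) :
    tile2 n k1 k2 = Set.pi Set.univ
      (![Set.Icc ((k1 : ℝ) / n) (((k1 : ℝ) + 1) / n),
         Set.Icc ((k2 : ℝ) / n) (((k2 : ℝ) + 1) / n)]) := by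
  ext x
  simp [tile2, Set.mem_pi, Fin.forall_fin_two]

lemma tile2_measurable (n : ℕ) (k1 k2 : Fin n) : MeasurableSet (tile2 n k1 k2) := by
  rw [tile2_eq]
  exact MeasurableSet.univ_pi fun i => by fin_cases i <;> exact measurableSet_Icc

lemma tile2_volume (n : ℕ) (hn : 1 ≤ n) (k1 k2 : Fin n) :
    volume (tile2 n k1 k2) = ENNReal.ofReal (1 / (n : ℝ) ^ 2) := by
  have hnr : (0:ℝ) < n := by exact_mod_cast hn
  rw [tile2_eq, volume_pi_pi]
  have h : ∀ (k : Fin n), ((k : ℝ) + 1) / n - (k : ℝ) / n = 1 / n := by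
    intro k; field_simp; ring
  rw [Fin.prod_univ_two]
  simp only [Matrix.cons_val_zero, Matrix.cons_val_one, Matrix.head_cons, Real.volume_Icc, h]
  rw [← ENNReal.ofReal_mul (by positivity)]
  congr 1
  field_simp

theorem tv_distance_eq_one (n : ℕ) (hn : 1 ≤ n) (N L : ℕ)
    (φ : (Fin 1 → ℝ) → (Fin 2 → ℝ)) (hφ : RealizedBy L 1 2 φ N)
    (P : Measure (Fin 2 → ℝ)) (hP : IsHist2 n P) :
    tvDist P (Uniform01.map fun x : ℝ => φ (fun _ => x)) = 1 := by
  obtain ⟨w, hw, hsum, hPd⟩ := hP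
  -- φ is Lipschitz
  obtain ⟨L', rfl⟩ : ∃ L', L = L' + 1 := by
    cases L with
    | zero => exact absurd hφ (by simp [RealizedBy])
    | succ L => exact ⟨L, rfl⟩
  obtain ⟨K, hK⟩ := realized_lipschitz L' 1 2 φ N hφ
  set g : ℝ → (Fin 2 → ℝ) := fun x => φ (fun _ => x) with hg
  have hconst : LipschitzWith 1 (fun x : ℝ => (fun _ : Fin 1 => x)) := by
    refine LipschitzWith.of_dist_le_mul fun x y => ?_
    rw [NNReal.coe_one, one_mul]
    exact (dist_pi_le_iff dist_nonneg).2 fun i => le_refl _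
  have hgL : LipschitzWith (K * 1) g := hK.comp hconst
  have hgc : Continuous g := hgL.continuous
  have hgm : Measurable g := hgc.measurable
  -- the image set A
  set A : Set (Fin 2 → ℝ) := g '' Set.Icc 0 1 with hA
  have hAcomp : IsCompact A := (isCompact_Icc).image hgc
  have hAm : MeasurableSet A := hAcomp.measurableSet
  -- A has volume zero
  have hAnull : volume A = 0 := by
    have h1 : μH[1] A ≤ (K * 1 : NNReal) ^ (1:ℝ) * μH[1] (Set.Icc (0:ℝ) 1) :=
      hgL.hausdorffMeasure_image_le zero_le_one _
    have hIcc : μH[1] (Set.Icc (0:ℝ) 1) = 1 := by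
      rw [MeasureTheory.hausdorffMeasure_real, Real.volume_Icc]; simp
    have h1fin : μH[1] A < ⊤ := by
      refine lt_of_le_of_lt h1 ?_
      rw [hIcc, mul_one]
      exact ENNReal.rpow_lt_top_of_nonneg zero_le_one ENNReal.coe_ne_top
    have h2 : μH[(2:ℝ)] A = 0 := by
      rcases MeasureTheory.Measure.hausdorffMeasure_zero_or_top (by norm_num : (1:ℝ) < 2) A with h | h
      · exact h
      · exact absurd h h1fin.ne
    have : μH[((Fintype.card (Fin 2) : ℕ) : ℝ)] = (volume : Measure (Fin 2 → ℝ)) :=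
      MeasureTheory.hausdorffMeasure_pi_real
    rw [← this]
    simpa using h2
  -- ν notation
  set ν : Measure (Fin 2 → ℝ) := Uniform01.map g with hν
  -- P A = 0
  have hPA : P A = 0 := by
    rw [hPd, withDensity_apply _ hAm]
    exact setLIntegral_measure_zero _ _ hAnull
  -- P univ = 1
  have hPuniv : P Set.univ = 1 := by
    rw [hPd, withDensity_apply _ MeasurableSet.univ, Measure.restrict_univ]
    rw [lintegral_finset_sum _ (fun k1 _ => by
      refine Finset.measurable_sum _ fun k2 _ => ?_
      exact (measurable_const.indicator (tile2_measurable n k1 k2)))]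
    have : ∀ k1 : Fin n, ∫⁻ x, ∑ k2 : Fin n,
        Set.indicator (tile2 n k1 k2) (fun _ => ENNReal.ofReal (w k1 k2)) x
        = ∑ k2 : Fin n, ENNReal.ofReal (w k1 k2 / (n:ℝ)^2) := by
      intro k1
      rw [lintegral_finset_sum _ (fun k2 _ =>
        measurable_const.indicator (tile2_measurable n k1 k2))]
      refine Finset.sum_congr rfl fun k2 _ => ?_
      rw [lintegral_indicator (tile2_measurable n k1 k2) _, setLIntegral_const,
        tile2_volume n hn k1 k2, ← ENNReal.ofReal_mul (le_of_lt (hw k1 k2))]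
      congr 1
      field_simp
    simp only [this]
    have hnr : (0:ℝ) < n := by exact_mod_cast hn
    rw [← ENNReal.ofReal_one]
    have : ∀ k1 : Fin n, ∑ k2 : Fin n, ENNReal.ofReal (w k1 k2 / (n:ℝ)^2)
        = ENNReal.ofReal (∑ k2 : Fin n, w k1 k2 / (n:ℝ)^2) := by
      intro k1
      rw [ENNReal.ofReal_sum_of_nonneg fun k2 _ => div_nonneg (hw k1 k2).le (by positivity)]
    simp only [this]
    rw [← ENNReal.ofReal_sum_of_nonneg fun k1 _ => Finset.sum_nonneg fun k2 _ =>
      div_nonneg (hw k1 k2).le (by positivity)]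
    congr 1
    simp only [div_eq_mul_inv, ← Finset.sum_mul]
    rw [hsum]
    field_simp
  -- ν univ = 1
  have hνuniv : ν Set.univ = 1 := by
    rw [hν, Measure.map_apply hgm MeasurableSet.univ, Set.preimage_univ]
    simp [Uniform01, Real.volume_Icc]
  -- ν Aᶜ = 0
  have hνAc : ν Aᶜ = 0 := by
    rw [hν, Measure.map_apply hgm hAm.compl]
    rw [Uniform01, Measure.restrict_apply (hgm hAm.compl)]
    convert measure_empty
    · ext x
      simp only [Set.mem_inter_iff, Set.mem_preimage, Set.mem_compl_iff, Set.mem_empty_iff_false,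
        iff_false, not_and]
      intro hx hmem
      exact hx (Set.mem_image_of_mem g hmem)
    · infer_instance
  -- P Aᶜ = 1
  have hPAc : P Aᶜ = 1 := by
    have := measure_add_measure_compl (μ := P) hAm
    rw [hPA, zero_add] at this
    rw [this, hPuniv]
  -- now compute the supremum
  have hbd : ∀ B : {A : Set (Fin 2 → ℝ) // MeasurableSet A},
      |(P B.1).toReal - (ν B.1).toReal| ≤ 1 := by
    intro B
    have h1 : (P B.1).toReal ≤ 1 := by
      have : P B.1 ≤ 1 := hPuniv ▸ measure_mono (Set.subset_univ _)
      simpa using ENNReal.toReal_mono one_ne_top this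
    have h2 : (ν B.1).toReal ≤ 1 := by
      have : ν B.1 ≤ 1 := hνuniv ▸ measure_mono (Set.subset_univ _)
      simpa using ENNReal.toReal_mono one_ne_top this
    rw [abs_sub_le_iff]
    constructor <;> [skip; skip] <;>
      linarith [ENNReal.toReal_nonneg (a := P B.1), ENNReal.toReal_nonneg (a := ν B.1)]
  refine le_antisymm (ciSup_le hbd) ?_
  have := le_ciSup (f := fun B : {A : Set (Fin 2 → ℝ) // MeasurableSet A} =>
      |(P B.1).toReal - (ν B.1).toReal|) ⟨1, by rintro x ⟨B, rfl⟩; exact hbd B⟩ ⟨Aᶜ, hAm.compl⟩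
  calc (1:ℝ) = |(P Aᶜ).toReal - (ν Aᶜ).toReal| := by rw [hPAc, hνAc]; simp
    _ ≤ _ := this
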